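/- Let I ⊂ ℝ be an open interval, E a Banach space, and α : I → E a continuous curve such that for every s ∈ I the right derivative ∂_s⁺α(s) = lim_{σ→0⁺} (α(s+σ) − α(s))/σ exists in E, and the map s ↦ ∂_s⁺α(s) is continuous on I. Then α is continuously differentiable on I with derivative ∂_s α = ∂_s⁺ α. -/

import Mathlib

open Filter Topology Set intervalIntegral

theorem continuous_right_derivative_implies_C1
    {E : Type*} [NormedAddCommGroup E] [NormedSpace ℝ E] [CompleteSpace E]
    (I : Set ℝ) (hIopen : IsOpen I) (hIord : I.OrdConnected)
    (α : ℝ → E) (hα : ContinuousOn α I)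
    (d : ℝ → E)
    (hd : ∀ s ∈ I, Tendsto (fun σ : ℝ => σ⁻¹ • (α (s + σ) - α s))
        (𝓝[>] (0:ℝ)) (𝓝 (d s)))
    (hdcont : ContinuousOn d I) :
    ∀ s ∈ I, HasDerivAt α (d s) s := by
  -- Step 1: right derivative within `Ici`
  have hD : ∀ s ∈ I, HasDerivWithinAt α (d s) (Ici s) s := by
    intro s hs
    rw [hasDerivWithinAt_iff_tendsto_slope]
    have hIci : Ici s \ {s} = Ioi s := by
      ext t; simp [lt_iff_le_and_ne, and_comm, eq_comm]
    rw [hIci]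
    have htend : Tendsto (fun t => t - s) (𝓝[>] s) (𝓝[>] (0:ℝ)) := by
      apply tendsto_nhdsWithin_of_tendsto_nhds_of_eventually_within
      · have : Tendsto (fun t => t - s) (𝓝 s) (𝓝 (0:ℝ)) := by
          simpa using (continuous_sub_right s).tendsto s
        exact this.mono_left nhdsWithin_le_nhds
      · filter_upwards [self_mem_nhdsWithin] with t ht
        simpa using ht
    have := (hd s hs).comp htend
    refine this.congr (fun t => ?_)
    simp [slope_def_module, Function.comp]
  -- FTC derivative of the primitive at points of I
  have hprim : ∀ a ∈ I, ∀ x ∈ I, a ≤ x →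
      HasDerivAt (fun t => ∫ u in a..t, d u) (d x) x := by
    intro a ha x hx hax
    have hIcc : Icc a x ⊆ I := hIord.out ha hx
    have hint : IntervalIntegrable d MeasureTheory.volume a x :=
      (hdcont.mono (by rwa [uIcc_of_le hax])).intervalIntegrable
    have hmeas : StronglyMeasurableAtFilter d (𝓝 x) :=
      hdcont.stronglyMeasurableAtFilter hIopen x hx
    exact integral_hasDerivAt_right hint hmeas
      (hdcont.continuousAt (hIopen.mem_nhds hx))
  -- Step 2: α b - α a = ∫ a..b d
  have key : ∀ a ∈ I, ∀ b ∈ I, a ≤ b → α b - α a = ∫ u in a..b, d u := by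
    intro a ha b hb hab
    have hIcc : Icc a b ⊆ I := hIord.out ha hb
    set f : ℝ → E := fun t => α t - ∫ u in a..t, d u with hf
    have hgder : ∀ x ∈ Icc a b, HasDerivAt (fun t => ∫ u in a..t, d u) (d x) x :=
      fun x hx => hprim a ha x (hIcc hx) hx.1
    have hfc : ContinuousOn f (Icc a b) :=
      (hα.mono hIcc).sub (fun x hx => (hgder x hx).continuousAt.continuousWithinAt)
    have hfd : ∀ x ∈ Ico a b, HasDerivWithinAt f 0 (Ici x) x := by
      intro x hx
      have h1 := hD x (hIcc (Ico_subset_Icc_self hx))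
      have h2 := (hgder x (Ico_subset_Icc_self hx)).hasDerivWithinAt (s := Ici x)
      have h3 := h1.sub h2
      rw [sub_self] at h3
      exact h3
    have := norm_image_sub_le_of_norm_deriv_right_le_segment hfc hfd
      (C := 0) (fun x _ => le_of_eq norm_zero) b (right_mem_Icc.2 hab)
    rw [zero_mul] at this
    have hfb : f b = f a := by
      have := le_antisymm this (norm_nonneg _)
      rwa [norm_eq_zero, sub_eq_zero] at this
    have hfa : f a = α a := by simp [hf]
    rw [hfa] at hfb
    simp only [hf] at hfb
    have h3 := sub_eq_iff_eq_add.mp hfb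
    rw [sub_eq_iff_eq_add, h3, add_comm]
  -- Step 3: conclude
  intro s hs
  obtain ⟨ε, hε, hball⟩ := Metric.isOpen_iff.1 hIopen s hs
  set a := s - ε/2 with ha_def
  have haI : a ∈ I := hball (by simp [ha_def, abs_of_nonpos, hε.le]; rw [abs_of_nonneg (by positivity)]; linarith)
  have has : a ≤ s := by simp [ha_def]; positivity
  have hg : HasDerivAt (fun t => α a + ∫ u in a..t, d u) (d s) s := by
    simpa using (hprim a haI s hs has).const_add (α a)
  apply hg.congr_of_eventuallyEq
  have hball2 : Metric.ball s (ε/2) ∈ 𝓝 s := Metric.ball_mem_nhds s (by positivity)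
  filter_upwards [hball2] with t ht
  have htI : t ∈ I := hball (Metric.ball_subset_ball (by linarith) ht)
  have hat : a ≤ t := by
    have := abs_lt.1 (mem_ball_iff_norm.1 ht)
    simp [ha_def]; linarith [this.1]
  have := key a haI t htI hat
  rw [← this]
  abel
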